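/- Let 0 < α < 1/2 and 0 < τ < 1. Then Γ(2α−τ) · Γ(τ+1) · sin(π(α−τ)) ≠ Γ(2α) · sin(πα). -/

import Mathlib

open Real Filter Finset

/-- Two-point log-convexity inequality for `Γ`. -/
lemma gamma_mul_gamma_le {a b c d : ℝ} (ha : 0 < a) (hac : a ≤ c) (had : a ≤ d)
    (hsum : a + b = c + d) : Real.Gamma c * Real.Gamma d ≤ Real.Gamma a * Real.Gamma b := by
  have hb : a ≤ b := by linarith
  have hc0 : 0 < c := lt_of_lt_of_le ha hac
  have hd0 : 0 < d := lt_of_lt_of_le ha had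
  have hb0 : 0 < b := lt_of_lt_of_le ha hb
  rcases eq_or_lt_of_le hb with hab | hab
  · have hca : c = a := by linarith
    have hda : d = b := by linarith
    rw [hca, hda]
  · have hba : 0 < b - a := by linarith
    have hμ0 : 0 ≤ (b - c) / (b - a) := by apply div_nonneg _ hba.le; linarith
    have hν0 : 0 ≤ (c - a) / (b - a) := by apply div_nonneg _ hba.le; linarith
    have hμν : (b - c) / (b - a) + (c - a) / (b - a) = 1 := by
      rw [← add_div]; field_simp; ring
    have hcv := Real.convexOn_log_Gamma.2 (Set.mem_Ioi.2 ha) (Set.mem_Ioi.2 hb0) hμ0 hν0 hμν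
    have hcv' := Real.convexOn_log_Gamma.2 (Set.mem_Ioi.2 ha) (Set.mem_Ioi.2 hb0) hν0 hμ0
      (by linarith : (c - a) / (b - a) + (b - c) / (b - a) = 1)
    simp only [smul_eq_mul, Function.comp_apply] at hcv hcv'
    have hc_eq : (b - c) / (b - a) * a + (c - a) / (b - a) * b = c := by
      field_simp; ring
    have hd_eq : (c - a) / (b - a) * a + (b - c) / (b - a) * b = d := by
      have h : d = a + b - c := by linarith
      rw [h]; field_simp; ring
    rw [hc_eq] at hcv
    rw [hd_eq] at hcv'
    have hlog : Real.log (Real.Gamma c) + Real.log (Real.Gamma d) ≤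
        Real.log (Real.Gamma a) + Real.log (Real.Gamma b) := by
      have h3 : (b - c) / (b - a) * Real.log (Real.Gamma a) + (c - a) / (b - a) * Real.log (Real.Gamma b)
          + ((c - a) / (b - a) * Real.log (Real.Gamma a) + (b - c) / (b - a) * Real.log (Real.Gamma b))
          = Real.log (Real.Gamma a) + Real.log (Real.Gamma b) := by
        linear_combination (Real.log (Real.Gamma a) + Real.log (Real.Gamma b)) * hμν
      linarith [add_le_add hcv hcv']
    have gpos : ∀ s : ℝ, 0 < s → 0 < Real.Gamma s := fun s hs => Real.Gamma_pos_of_pos hs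
    rw [← Real.log_mul (gpos c hc0).ne' (gpos d hd0).ne',
        ← Real.log_mul (gpos a ha).ne' (gpos b hb0).ne'] at hlog
    exact (Real.log_le_log_iff (mul_pos (gpos c hc0) (gpos d hd0))
      (mul_pos (gpos a ha) (gpos b hb0))).1 hlog


lemma gamma_four_lt {a x y x' y' : ℝ} (ha : 0 < a) (hx : 0 < x) (hy : 0 < y)
    (hx' : 0 < x') (hy' : 0 < y') (hs : x + y = x' + y')
    (hD : (y' - x') ^ 2 < (y - x) ^ 2) :
    Real.Gamma (x + a) * Real.Gamma (y + a) * Real.Gamma x' * Real.Gamma y' <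
      Real.Gamma (x' + a) * Real.Gamma (y' + a) * Real.Gamma x * Real.Gamma y := by
  -- per-index products
  set A : ℕ → ℝ := fun j => (x' + a + j) * (y' + a + j) * (x + j) * (y + j) with hA
  set B : ℕ → ℝ := fun j => (x + a + j) * (y + a + j) * (x' + j) * (y' + j) with hB
  have hApos : ∀ j : ℕ, 0 < A j := by
    intro j
    have hj : (0:ℝ) ≤ j := Nat.cast_nonneg j
    simp only [hA]
    positivity
  have hBpos : ∀ j : ℕ, 0 < B j := by
    intro j
    have hj : (0:ℝ) ≤ j := Nat.cast_nonneg j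
    simp only [hB]
    positivity
  have hABlt : ∀ j : ℕ, A j < B j := by
    intro j
    have hj : (0:ℝ) ≤ j := Nat.cast_nonneg j
    have hid : B j - A j = ((y - x) ^ 2 - (y' - x') ^ 2) / 4 * (a * (x + y + a + 2 * j)) := by
      have hy'eq : y' = x + y - x' := by linarith
      simp only [hA, hB, hy'eq]; ring
    have h2 : 0 < ((y - x) ^ 2 - (y' - x') ^ 2) / 4 * (a * (x + y + a + 2 * j)) := by
      apply mul_pos (by linarith)
      apply mul_pos ha
      linarith
    linarith [hid, h2]
  -- the main finite-n inequality
  have hmain : ∀ n : ℕ, 1 ≤ n →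
      (Real.GammaSeq (x + a) n * Real.GammaSeq (y + a) n * Real.GammaSeq x' n *
        Real.GammaSeq y' n) * B 0 ≤
      (Real.GammaSeq (x' + a) n * Real.GammaSeq (y' + a) n * Real.GammaSeq x n *
        Real.GammaSeq y n) * A 0 := by
    intro n hn
    have hn0 : (0:ℝ) < n := by exact_mod_cast hn
    have hfac : (0:ℝ) < (Nat.factorial n : ℝ) := by exact_mod_cast Nat.factorial_pos n
    have prodpos : ∀ s : ℝ, 0 < s → 0 < ∏ j ∈ Finset.range (n + 1), (s + (j:ℝ)) := by
      intro s hs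
      apply Finset.prod_pos
      intro j _
      have : (0:ℝ) ≤ j := Nat.cast_nonneg j
      linarith
    have hPA : 0 < ∏ j ∈ Finset.range (n + 1), A j := Finset.prod_pos fun j _ => hApos j
    have hPB : 0 < ∏ j ∈ Finset.range (n + 1), B j := Finset.prod_pos fun j _ => hBpos j
    have e1 : Real.GammaSeq (x + a) n * Real.GammaSeq (y + a) n * Real.GammaSeq x' n *
        Real.GammaSeq y' n =
        ((n:ℝ) ^ (x + a) * (n:ℝ) ^ (y + a) * (n:ℝ) ^ x' * (n:ℝ) ^ y' * (Nat.factorial n : ℝ) ^ 4) /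
          ∏ j ∈ Finset.range (n + 1), B j := by
      simp only [Real.GammaSeq, hB]
      rw [div_mul_div_comm, div_mul_div_comm, div_mul_div_comm,
        ← Finset.prod_mul_distrib, ← Finset.prod_mul_distrib, ← Finset.prod_mul_distrib]
      congr 1
      ring
    have e2 : Real.GammaSeq (x' + a) n * Real.GammaSeq (y' + a) n * Real.GammaSeq x n *
        Real.GammaSeq y n =
        ((n:ℝ) ^ (x' + a) * (n:ℝ) ^ (y' + a) * (n:ℝ) ^ x * (n:ℝ) ^ y * (Nat.factorial n : ℝ) ^ 4) /
          ∏ j ∈ Finset.range (n + 1), A j := by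
      simp only [Real.GammaSeq, hA]
      rw [div_mul_div_comm, div_mul_div_comm, div_mul_div_comm,
        ← Finset.prod_mul_distrib, ← Finset.prod_mul_distrib, ← Finset.prod_mul_distrib]
      congr 1
      ring
    have e3 : (n:ℝ) ^ (x + a) * (n:ℝ) ^ (y + a) * (n:ℝ) ^ x' * (n:ℝ) ^ y' =
        (n:ℝ) ^ (x' + a) * (n:ℝ) ^ (y' + a) * (n:ℝ) ^ x * (n:ℝ) ^ y := by
      rw [← Real.rpow_add hn0, ← Real.rpow_add hn0, ← Real.rpow_add hn0,
        ← Real.rpow_add hn0, ← Real.rpow_add hn0, ← Real.rpow_add hn0]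
      congr 1
      linarith
    set N : ℝ := (n:ℝ) ^ (x' + a) * (n:ℝ) ^ (y' + a) * (n:ℝ) ^ x * (n:ℝ) ^ y * (Nat.factorial n : ℝ) ^ 4
      with hN
    have hN0 : 0 < N := by
      have := Real.rpow_pos_of_pos hn0 (x' + a)
      have := Real.rpow_pos_of_pos hn0 (y' + a)
      have := Real.rpow_pos_of_pos hn0 x
      have := Real.rpow_pos_of_pos hn0 y
      positivity
    rw [e1, e2, e3]
    rw [div_mul_eq_mul_div, div_mul_eq_mul_div, div_le_div_iff₀ hPB hPA]
    rw [Finset.prod_range_succ', Finset.prod_range_succ']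
    -- goal: N * B 0 * (∏ A (i+1) * A 0) ≤ N * A 0 * (∏ B (i+1) * B 0)
    have hstep : (∏ i ∈ Finset.range n, A (i + 1)) ≤ ∏ i ∈ Finset.range n, B (i + 1) := by
      apply Finset.prod_le_prod
      · intro i _; exact (hApos (i + 1)).le
      · intro i _; exact (hABlt (i + 1)).le
    calc N * B 0 * ((∏ i ∈ Finset.range n, A (i + 1)) * A 0)
        = N * A 0 * B 0 * (∏ i ∈ Finset.range n, A (i + 1)) := by ring
      _ ≤ N * A 0 * B 0 * (∏ i ∈ Finset.range n, B (i + 1)) := by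
          apply mul_le_mul_of_nonneg_left hstep
          positivity
      _ = N * A 0 * ((∏ i ∈ Finset.range n, B (i + 1)) * B 0) := by ring
  -- pass to the limit
  have hPlim : Tendsto (fun n => (Real.GammaSeq (x + a) n * Real.GammaSeq (y + a) n *
      Real.GammaSeq x' n * Real.GammaSeq y' n) * B 0) atTop
      (nhds ((Real.Gamma (x + a) * Real.Gamma (y + a) * Real.Gamma x' * Real.Gamma y') * B 0)) :=
    ((((Real.GammaSeq_tendsto_Gamma (x + a)).mul (Real.GammaSeq_tendsto_Gamma (y + a))).mul
      (Real.GammaSeq_tendsto_Gamma x')).mul (Real.GammaSeq_tendsto_Gamma y')).mul_const _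
  have hQlim : Tendsto (fun n => (Real.GammaSeq (x' + a) n * Real.GammaSeq (y' + a) n *
      Real.GammaSeq x n * Real.GammaSeq y n) * A 0) atTop
      (nhds ((Real.Gamma (x' + a) * Real.Gamma (y' + a) * Real.Gamma x * Real.Gamma y) * A 0)) :=
    ((((Real.GammaSeq_tendsto_Gamma (x' + a)).mul (Real.GammaSeq_tendsto_Gamma (y' + a))).mul
      (Real.GammaSeq_tendsto_Gamma x)).mul (Real.GammaSeq_tendsto_Gamma y)).mul_const _
  have hle := le_of_tendsto_of_tendsto hPlim hQlim
    (eventually_atTop.2 ⟨1, fun n hn => hmain n hn⟩)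
  -- conclude
  have hA0 : 0 < A 0 := hApos 0
  have hB0 : 0 < B 0 := hBpos 0
  have hAB0 : A 0 < B 0 := hABlt 0
  have hM : 0 < Real.Gamma (x' + a) * Real.Gamma (y' + a) * Real.Gamma x * Real.Gamma y := by
    have := Real.Gamma_pos_of_pos (by linarith : 0 < x' + a)
    have := Real.Gamma_pos_of_pos (by linarith : 0 < y' + a)
    have := Real.Gamma_pos_of_pos hx
    have := Real.Gamma_pos_of_pos hy
    positivity
  nlinarith [hle, hM, hA0, hB0, hAB0]

/-- For `0 < α < 1/2` and `0 < τ < 1`, the transcendental equation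
`Γ(2α−τ)·Γ(τ+1)·sin(π(α−τ)) = Γ(2α)·sin(πα)` has no solution. -/

theorem no_root_transcendental_eq_low_regularity
    (α τ : ℝ) (hα : 0 < α) (hα' : α < 1 / 2) (hτ : 0 < τ) (hτ' : τ < 1) :
    Real.Gamma (2 * α - τ) * Real.Gamma (τ + 1) * Real.sin (Real.pi * (α - τ)) ≠
      Real.Gamma (2 * α) * Real.sin (Real.pi * α) := by
  have hπ := Real.pi_pos
  have hsinα : 0 < Real.sin (Real.pi * α) := by
    apply Real.sin_pos_of_pos_of_lt_pi (by positivity)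
    nlinarith
  have hΓ2α : 0 < Real.Gamma (2 * α) := Real.Gamma_pos_of_pos (by linarith)
  have hΓτ1 : 0 < Real.Gamma (τ + 1) := Real.Gamma_pos_of_pos (by linarith)
  have hP : 0 < Real.Gamma α := Real.Gamma_pos_of_pos hα
  have hQ : 0 < Real.Gamma (1 - α) := Real.Gamma_pos_of_pos (by linarith)
  have E1 : Real.Gamma α * Real.Gamma (1 - α) * Real.sin (Real.pi * α) = Real.pi := by
    rw [Real.Gamma_mul_Gamma_one_sub α, div_mul_cancel₀ _ hsinα.ne']
  rcases lt_or_ge τ α with hcase | hcase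
  · -- Case A : 0 < τ < α, strict decrease via gamma_four_lt, LHS < RHS
    apply ne_of_lt
    have hsinατ : 0 < Real.sin (Real.pi * (α - τ)) := by
      apply Real.sin_pos_of_pos_of_lt_pi (by nlinarith)
      nlinarith
    have E2 : Real.Gamma (α - τ) * Real.Gamma (1 - α + τ) * Real.sin (Real.pi * (α - τ)) =
        Real.pi := by
      rw [show (1:ℝ) - α + τ = 1 - (α - τ) by ring, Real.Gamma_mul_Gamma_one_sub (α - τ),
        div_mul_cancel₀ _ hsinατ.ne']
    have K := gamma_four_lt (a := α) (x := α - τ) (y := 1 - α + τ) (x' := α) (y' := 1 - α)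
      hα (by linarith) (by nlinarith) hα (by linarith) (by ring)
      (by nlinarith : ((1 - α) - α) ^ 2 < ((1 - α + τ) - (α - τ)) ^ 2)
    rw [show α - τ + α = 2 * α - τ by ring, show 1 - α + τ + α = τ + 1 by ring,
      show α + α = 2 * α by ring, show 1 - α + α = (1:ℝ) by ring, Real.Gamma_one, mul_one] at K
    -- K : Γ(2α-τ) * Γ(τ+1) * Γ α * Γ (1-α) < Γ(2α) * Γ(α-τ) * Γ(1-α+τ)
    have hM : 0 < Real.sin (Real.pi * (α - τ)) * Real.sin (Real.pi * α) :=
      mul_pos hsinατ hsinα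
    have KK := mul_lt_mul_of_pos_right K hM
    apply lt_of_mul_lt_mul_right _ hπ.le
    calc Real.Gamma (2 * α - τ) * Real.Gamma (τ + 1) * Real.sin (Real.pi * (α - τ)) * Real.pi
        = Real.Gamma (2 * α - τ) * Real.Gamma (τ + 1) * Real.sin (Real.pi * (α - τ)) *
            (Real.Gamma α * Real.Gamma (1 - α) * Real.sin (Real.pi * α)) := by rw [E1]
      _ = Real.Gamma (2 * α - τ) * Real.Gamma (τ + 1) * Real.Gamma α * Real.Gamma (1 - α) *
            (Real.sin (Real.pi * (α - τ)) * Real.sin (Real.pi * α)) := by ring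
      _ < Real.Gamma (2 * α) * Real.Gamma (α - τ) * Real.Gamma (1 - α + τ) *
            (Real.sin (Real.pi * (α - τ)) * Real.sin (Real.pi * α)) := KK
      _ = Real.Gamma (2 * α) * Real.sin (Real.pi * α) *
            (Real.Gamma (α - τ) * Real.Gamma (1 - α + τ) * Real.sin (Real.pi * (α - τ))) := by
          ring
      _ = Real.Gamma (2 * α) * Real.sin (Real.pi * α) * Real.pi := by rw [E2]
  rcases le_or_gt τ (2 * α) with hcase2 | hcase2
  · -- Case B : α ≤ τ ≤ 2α, LHS ≤ 0 < RHS
    apply ne_of_lt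
    have h1 : 0 ≤ Real.Gamma (2 * α - τ) := by
      rcases eq_or_lt_of_le hcase2 with h | h
      · rw [show 2 * α - τ = 0 by linarith, Real.Gamma_zero]
      · exact (Real.Gamma_pos_of_pos (by linarith)).le
    have h2 : Real.sin (Real.pi * (α - τ)) ≤ 0 := by
      rw [show Real.pi * (α - τ) = -(Real.pi * (τ - α)) by ring, Real.sin_neg]
      simp only [neg_nonpos]
      apply Real.sin_nonneg_of_nonneg_of_le_pi (by nlinarith)
      nlinarith
    calc Real.Gamma (2 * α - τ) * Real.Gamma (τ + 1) * Real.sin (Real.pi * (α - τ)) ≤ 0 :=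
          mul_nonpos_of_nonneg_of_nonpos (mul_nonneg h1 hΓτ1.le) h2
      _ < Real.Gamma (2 * α) * Real.sin (Real.pi * α) := mul_pos hΓ2α hsinα
  · -- Case C : 2α < τ < 1, LHS > RHS
    apply ne_of_gt
    have hτα : α < τ := by linarith
    have hsinτα : 0 < Real.sin (Real.pi * (τ - α)) := by
      apply Real.sin_pos_of_pos_of_lt_pi (by nlinarith)
      nlinarith
    have hA : 0 < Real.Gamma (2 * α - τ + 1) := Real.Gamma_pos_of_pos (by linarith)
    have hC : 0 < Real.Gamma (τ - α) := Real.Gamma_pos_of_pos (by linarith)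
    have hD : 0 < Real.Gamma (1 - τ + α) := Real.Gamma_pos_of_pos (by linarith)
    have hCp : 0 < Real.Gamma (τ - α + 1) := Real.Gamma_pos_of_pos (by linarith)
    have hne : (2 : ℝ) * α - τ ≠ 0 := by
      intro h; nlinarith
    -- the two convexity inequalities
    have I1 : Real.Gamma 1 * Real.Gamma (τ - α + 1) ≤ Real.Gamma (1 - α) * Real.Gamma (τ + 1) :=
      gamma_mul_gamma_le (a := 1 - α) (b := τ + 1) (c := 1) (d := τ - α + 1)
        (by linarith) (by linarith) (by linarith) (by ring)
    have I2 : Real.Gamma (1 - τ + α) * Real.Gamma (2 * α) ≤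
        Real.Gamma α * Real.Gamma (2 * α - τ + 1) :=
      gamma_mul_gamma_le (a := α) (b := 2 * α - τ + 1) (c := 1 - τ + α) (d := 2 * α)
        hα (by linarith) (by linarith) (by ring)
    rw [Real.Gamma_one, one_mul] at I1
    have hrec : Real.Gamma (τ - α + 1) = (τ - α) * Real.Gamma (τ - α) :=
      Real.Gamma_add_one (by linarith : (0:ℝ) < τ - α).ne'
    -- final product inequality F
    have F : (τ - 2 * α) * Real.Gamma (τ - α) * Real.Gamma (1 - τ + α) * Real.Gamma (2 * α) <
        Real.Gamma (2 * α - τ + 1) * Real.Gamma (τ + 1) * Real.Gamma α * Real.Gamma (1 - α) := by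
      have step1 : (τ - 2 * α) * Real.Gamma (τ - α) < Real.Gamma (τ - α + 1) := by
        rw [hrec]
        have : 0 < α * Real.Gamma (τ - α) := by positivity
        nlinarith
      have step2 : Real.Gamma (τ - α + 1) * (Real.Gamma (1 - τ + α) * Real.Gamma (2 * α)) ≤
          (Real.Gamma (1 - α) * Real.Gamma (τ + 1)) * (Real.Gamma α * Real.Gamma (2 * α - τ + 1)) :=
        mul_le_mul I1 I2 (by positivity) (by positivity)
      nlinarith [step1, step2, mul_pos hD hΓ2α]
    -- key product identities
    have e1 : Real.Gamma (2 * α - τ) * Real.Gamma (τ + 1) * Real.sin (Real.pi * (α - τ)) *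
        ((τ - 2 * α) * (Real.Gamma (τ - α) * Real.Gamma (1 - τ + α))) =
        Real.Gamma (2 * α - τ + 1) * Real.Gamma (τ + 1) * Real.pi := by
      have hg : (2 * α - τ) * Real.Gamma (2 * α - τ) = Real.Gamma (2 * α - τ + 1) :=
        (Real.Gamma_add_one hne).symm
      have hs : Real.Gamma (τ - α) * Real.Gamma (1 - τ + α) * Real.sin (Real.pi * (τ - α)) =
          Real.pi := by
        rw [show (1:ℝ) - τ + α = 1 - (τ - α) by ring, Real.Gamma_mul_Gamma_one_sub (τ - α),
          div_mul_cancel₀ _ hsinτα.ne']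
      have hneg : Real.sin (Real.pi * (α - τ)) = -Real.sin (Real.pi * (τ - α)) := by
        rw [show Real.pi * (α - τ) = -(Real.pi * (τ - α)) by ring, Real.sin_neg]
      calc Real.Gamma (2 * α - τ) * Real.Gamma (τ + 1) * Real.sin (Real.pi * (α - τ)) *
            ((τ - 2 * α) * (Real.Gamma (τ - α) * Real.Gamma (1 - τ + α)))
          = ((2 * α - τ) * Real.Gamma (2 * α - τ)) * Real.Gamma (τ + 1) *
              (Real.Gamma (τ - α) * Real.Gamma (1 - τ + α) * Real.sin (Real.pi * (τ - α))) := by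
            rw [hneg]; ring
        _ = Real.Gamma (2 * α - τ + 1) * Real.Gamma (τ + 1) * Real.pi := by rw [hg, hs]
    have hMpos : 0 < (τ - 2 * α) * (Real.Gamma (τ - α) * Real.Gamma (1 - τ + α)) *
        (Real.Gamma α * Real.Gamma (1 - α)) := by
      have h0 : 0 < τ - 2 * α := by linarith
      positivity
    apply lt_of_mul_lt_mul_right _ hMpos.le
    calc Real.Gamma (2 * α) * Real.sin (Real.pi * α) *
          ((τ - 2 * α) * (Real.Gamma (τ - α) * Real.Gamma (1 - τ + α)) *
            (Real.Gamma α * Real.Gamma (1 - α)))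
        = (Real.Gamma α * Real.Gamma (1 - α) * Real.sin (Real.pi * α)) *
            ((τ - 2 * α) * Real.Gamma (τ - α) * Real.Gamma (1 - τ + α) * Real.Gamma (2 * α)) := by
          ring
      _ = Real.pi * ((τ - 2 * α) * Real.Gamma (τ - α) * Real.Gamma (1 - τ + α) *
            Real.Gamma (2 * α)) := by rw [E1]
      _ < Real.pi * (Real.Gamma (2 * α - τ + 1) * Real.Gamma (τ + 1) * Real.Gamma α *
            Real.Gamma (1 - α)) := by
          exact mul_lt_mul_of_pos_left F hπ
      _ = Real.Gamma (2 * α - τ) * Real.Gamma (τ + 1) * Real.sin (Real.pi * (α - τ)) *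
            ((τ - 2 * α) * (Real.Gamma (τ - α) * Real.Gamma (1 - τ + α))) *
            (Real.Gamma α * Real.Gamma (1 - α)) := by rw [e1]; ring
      _ = Real.Gamma (2 * α - τ) * Real.Gamma (τ + 1) * Real.sin (Real.pi * (α - τ)) *
            ((τ - 2 * α) * (Real.Gamma (τ - α) * Real.Gamma (1 - τ + α)) *
              (Real.Gamma α * Real.Gamma (1 - α))) := by ring
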